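/- The divergences of the reference Fortin–Soulie bubble fields span exactly the zero-mean affine functions: the set {a ∂₁φ + b ∂₂φ : a, b ∈ ℝ} is equal to the set of all polynomial functions q : ℝ² → ℝ of total degree at most 1 with ∫_{T̂} q(x) dx = 0. -/

import Mathlib

open MeasureTheory
open scoped MeasureTheory

noncomputable section

abbrev E2 : Type := EuclideanSpace ℝ (Fin 2)

/-- The point `(a, b)` in `ℝ²`. -/
def pt (a b : ℝ) : E2 := !₂[a, b]

/-- The closed reference triangle with vertices `(0,0)`, `(1,0)`, `(0,1)`. -/
def refT : Set E2 := {x : E2 | 0 ≤ x 0 ∧ 0 ≤ x 1 ∧ x 0 + x 1 ≤ 1}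

/-- The Fortin–Soulie bubble function. -/
def phi (x : E2) : ℝ := 2 - 3 * ((1 - x 0 - x 1) ^ 2 + (x 0) ^ 2 + (x 1) ^ 2)

/-- `i`-th partial derivative of a scalar function. -/
def dphi (i : Fin 2) (x : E2) : ℝ := fderiv ℝ phi x (EuclideanSpace.single i 1)

/-- `f` is (the evaluation map of) a polynomial of total degree at most `n`. -/
def IsPolyDeg (n : ℕ) (f : E2 → ℝ) : Prop :=
  ∃ p : MvPolynomial (Fin 2) ℝ, p.totalDegree ≤ n ∧
    ∀ x : E2, f x = MvPolynomial.eval (fun i => x i) p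

/-- Each component of `w` is a polynomial of total degree at most `n`. -/
def IsPolyVec (n : ℕ) (w : E2 → E2) : Prop :=
  ∀ i : Fin 2, IsPolyDeg n (fun x => w x i)

/-- The bubble vector field `(a φ, b φ)`. -/
def bub (a b : ℝ) (x : E2) : E2 := pt (a * phi x) (b * phi x)

/-- Jacobian determinant. -/
def jdet (F : E2 → E2) (x : E2) : ℝ := LinearMap.det (fderiv ℝ F x : E2 →ₗ[ℝ] E2)

/-- Piola transform matrix `A(x) = DF(x)/det DF(x)` as a continuous linear map. -/
def piola (F : E2 → E2) (x : E2) : E2 →L[ℝ] E2 := (jdet F x)⁻¹ • fderiv ℝ F x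

/-- Divergence: trace of the Jacobian. -/
def divg (f : E2 → E2) (x : E2) : ℝ :=
  LinearMap.trace ℝ E2 (fderiv ℝ f x : E2 →ₗ[ℝ] E2)

/-- `(K,h)`-admissible map. -/
def IsAdmissible (K h : ℝ) (F : E2 → E2) : Prop :=
  IsPolyVec 2 F ∧ Set.InjOn F refT ∧
  ∀ x ∈ refT, ∃ e : E2 ≃L[ℝ] E2,
    (e : E2 →L[ℝ] E2) = fderiv ℝ F x ∧
    ‖(e : E2 →L[ℝ] E2)‖ ≤ K * h ∧
    ‖(e.symm : E2 →L[ℝ] E2)‖ ≤ K * h⁻¹ ∧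
    ‖fderiv ℝ (fderiv ℝ F) x‖ ≤ K * h ^ 2 ∧
    K⁻¹ * h ^ 2 ≤ jdet F x ∧ jdet F x ≤ K * h ^ 2

/-- The six quadratic Lagrange nodes of the reference triangle. -/
def nodes : Set E2 :=
  {pt 0 0, pt 1 0, pt 0 1, pt (1/2) 0, pt (1/2) (1/2), pt 0 (1/2)}

/-- `(P, Q)` are the endpoints of an edge of the reference triangle. -/
def IsEdgePair (P Q : E2) : Prop :=
  (P = pt 0 0 ∧ Q = pt 1 0) ∨ (P = pt 0 0 ∧ Q = pt 0 1) ∨ (P = pt 1 0 ∧ Q = pt 0 1)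

/-- Sobolev seminorm `|v|_{W^{m,p}(S)}`. -/
def sobSemi (m : ℕ) (p : ℝ) (S : Set E2) (v : E2 → E2) : ℝ :=
  (∫ x in S, ‖iteratedFDeriv ℝ m v x‖ ^ p) ^ (1 / p)



-- Auxiliary material for stmt0

namespace Stmt0Aux

lemma phi_hasFDerivAt (x : E2) :
    HasFDerivAt phi
      ((6 - 12 * x 0 - 6 * x 1) • (EuclideanSpace.proj (𝕜 := ℝ) (0 : Fin 2))
       + (6 - 6 * x 0 - 12 * x 1) • (EuclideanSpace.proj (𝕜 := ℝ) (1 : Fin 2))) x := by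
  have h0 : HasFDerivAt (fun y : E2 => y 0) (EuclideanSpace.proj (𝕜 := ℝ) (0 : Fin 2)) x :=
    (EuclideanSpace.proj (𝕜 := ℝ) (0 : Fin 2)).hasFDerivAt
  have h1 : HasFDerivAt (fun y : E2 => y 1) (EuclideanSpace.proj (𝕜 := ℝ) (1 : Fin 2)) x :=
    (EuclideanSpace.proj (𝕜 := ℝ) (1 : Fin 2)).hasFDerivAt
  have h := (((h0.const_sub 1).sub h1).mul ((h0.const_sub 1).sub h1) |>.add (h0.mul h0)
      |>.add (h1.mul h1)).const_mul (3:ℝ) |>.const_sub 2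
  have hfun : phi = fun y : E2 =>
      2 - 3 * ((1 - y 0 - y 1) * (1 - y 0 - y 1) + y 0 * y 0 + y 1 * y 1) := by
    funext y; simp only [phi]; ring
  rw [hfun]
  have hL : ((6 - 12 * x 0 - 6 * x 1) • (EuclideanSpace.proj (𝕜 := ℝ) (0 : Fin 2))
       + (6 - 6 * x 0 - 12 * x 1) • (EuclideanSpace.proj (𝕜 := ℝ) (1 : Fin 2)))
      = -((3:ℝ) • ((1 - x 0 - x 1) • (-EuclideanSpace.proj (𝕜 := ℝ) (0:Fin 2) - EuclideanSpace.proj 1) +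
              (1 - x 0 - x 1) • (-EuclideanSpace.proj (𝕜 := ℝ) (0:Fin 2) - EuclideanSpace.proj 1) +
            (x 0 • EuclideanSpace.proj (𝕜 := ℝ) (0:Fin 2) + x 0 • EuclideanSpace.proj 0) +
          (x 1 • EuclideanSpace.proj (𝕜 := ℝ) (1:Fin 2) + x 1 • EuclideanSpace.proj 1))) := by
    ext v
    simp [ContinuousLinearMap.add_apply, ContinuousLinearMap.smul_apply,
      ContinuousLinearMap.neg_apply, ContinuousLinearMap.sub_apply]
    ring
  rw [hL]
  exact h

lemma dphi0 (x : E2) : dphi 0 x = 6 - 12 * x 0 - 6 * x 1 := by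
  rw [dphi, (phi_hasFDerivAt x).fderiv]
  simp [EuclideanSpace.single_apply]

lemma dphi1 (x : E2) : dphi 1 x = 6 - 6 * x 0 - 12 * x 1 := by
  rw [dphi, (phi_hasFDerivAt x).fderiv]
  simp [EuclideanSpace.single_apply]

open MvPolynomial in
lemma isPolyDeg_affine (c0 c1 c2 : ℝ) :
    IsPolyDeg 1 (fun x => c0 + c1 * x 0 + c2 * x 1) := by
  refine ⟨C c0 + C c1 * X 0 + C c2 * X 1, ?_, ?_⟩
  · apply le_trans (totalDegree_add _ _)
    simp only [max_le_iff]
    constructor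
    · apply le_trans (totalDegree_add _ _)
      simp only [max_le_iff]
      refine ⟨by simp [totalDegree_C], ?_⟩
      apply le_trans (totalDegree_mul _ _)
      simp [totalDegree_C, totalDegree_X]
    · apply le_trans (totalDegree_mul _ _)
      simp [totalDegree_C, totalDegree_X]
  · intro x; simp

open MvPolynomial Finsupp in
lemma affine_of_isPolyDeg {f : E2 → ℝ} (hf : IsPolyDeg 1 f) :
    ∃ c0 c1 c2 : ℝ, ∀ x : E2, f x = c0 + c1 * x 0 + c2 * x 1 := by
  classical
  obtain ⟨p, hdeg, hev⟩ := hf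
  refine ⟨coeff 0 p, coeff (Finsupp.single 0 1) p, coeff (Finsupp.single 1 1) p, fun x => ?_⟩
  rw [hev, eval_eq']
  have hsub : p.support ⊆ ({0, Finsupp.single 0 1, Finsupp.single 1 1} :
      Finset (Fin 2 →₀ ℕ)) := by
    intro d hd
    have h1 : (d.sum fun _ n => n) ≤ 1 := le_trans (le_totalDegree hd) hdeg
    have h2 : d 0 + d 1 ≤ 1 := by
      have := Finsupp.sum_fintype d (fun _ n => n) (fun _ => rfl)
      rw [this] at h1
      simpa [Fin.sum_univ_two] using h1
    have : (d 0 = 0 ∧ d 1 = 0) ∨ (d 0 = 1 ∧ d 1 = 0) ∨ (d 0 = 0 ∧ d 1 = 1) := by omega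
    simp only [Finset.mem_insert, Finset.mem_singleton]
    rcases this with ⟨h0, h1'⟩ | ⟨h0, h1'⟩ | ⟨h0, h1'⟩
    · left; ext i; fin_cases i <;> simp [h0, h1']
    · right; left; ext i; fin_cases i <;> simp [h0, h1', Finsupp.single_apply]
    · right; right; ext i; fin_cases i <;> simp [h0, h1', Finsupp.single_apply]
  rw [Finset.sum_subset hsub (fun d _ hd => by
    rw [MvPolynomial.notMem_support_iff.mp hd, zero_mul])]
  have hne1 : (0 : Fin 2 →₀ ℕ) ≠ Finsupp.single 0 1 := by
    intro h; have := DFunLike.congr_fun h 0; simp at this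
  have hne2 : (0 : Fin 2 →₀ ℕ) ≠ Finsupp.single 1 1 := by
    intro h; have := DFunLike.congr_fun h 1; simp at this
  have hne3 : (Finsupp.single (0:Fin 2) 1) ≠ Finsupp.single 1 1 := by
    intro h; have := DFunLike.congr_fun h 0; simp [Finsupp.single_apply] at this
  rw [Finset.sum_insert (by simp [hne1, hne2]), Finset.sum_insert (by simp [hne3]),
    Finset.sum_singleton]
  simp [Fin.prod_univ_two, Finsupp.single_apply]
  ring

def S2 : Set (ℝ × ℝ) := {p | 0 ≤ p.1 ∧ 0 ≤ p.2 ∧ p.1 + p.2 ≤ 1}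

def e2 : E2 ≃ᵐ (ℝ × ℝ) :=
  (MeasurableEquiv.toLp 2 (Fin 2 → ℝ)).symm.trans (MeasurableEquiv.piFinTwo (fun _ => ℝ))

lemma e2_mp : MeasurePreserving e2 volume volume :=
  (volume_preserving_piFinTwo (fun _ => ℝ)).comp
    (EuclideanSpace.volume_preserving_symm_measurableEquiv_toLp (Fin 2))

lemma refT_preimage : refT = e2 ⁻¹' S2 := rfl

lemma S2_closed : IsClosed S2 := by
  have : S2 = (fun p : ℝ×ℝ => p.1) ⁻¹' Set.Ici 0 ∩ ((fun p : ℝ×ℝ => p.2) ⁻¹' Set.Ici 0 ∩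
      (fun p : ℝ×ℝ => p.1 + p.2) ⁻¹' Set.Iic 1) := by
    ext p; simp [S2, Set.mem_setOf_eq]
  rw [this]
  exact (isClosed_Ici.preimage continuous_fst).inter
    ((isClosed_Ici.preimage continuous_snd).inter
      (isClosed_Iic.preimage (continuous_fst.add continuous_snd)))

lemma S2_compact : IsCompact S2 := by
  apply (isCompact_Icc (a := ((0:ℝ),(0:ℝ))) (b := (1,1))).of_isClosed_subset S2_closed
  rintro ⟨x, y⟩ ⟨hx, hy, hxy⟩
  simp only [Set.mem_Icc, Prod.mk_le_mk] at *
  exact ⟨⟨hx, hy⟩, by constructor <;> linarith⟩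

lemma inner_int (A B t : ℝ) : ∫ y in (0:ℝ)..t, (A + B * y) = A * t + B * (t^2/2) := by
  rw [intervalIntegral.integral_add intervalIntegrable_const
    (IntervalIntegrable.const_mul intervalIntegral.intervalIntegrable_id B)]
  rw [intervalIntegral.integral_const_mul, integral_id, intervalIntegral.integral_const]
  simp; ring

lemma integral_S2 (c0 c1 c2 : ℝ) :
    (∫ p in S2, (c0 + c1 * p.1 + c2 * p.2)) = c0/2 + c1/6 + c2/6 := by
  set g : ℝ × ℝ → ℝ := fun p => c0 + c1 * p.1 + c2 * p.2 with hg
  have hgc : Continuous g := by fun_prop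
  have hint : IntegrableOn g S2 := hgc.continuousOn.integrableOn_compact S2_compact
  have hmeas : MeasurableSet S2 := S2_closed.measurableSet
  rw [← integral_indicator hmeas]
  have hind : Integrable (S2.indicator g) := (integrable_indicator_iff hmeas).mpr hint
  rw [show (volume : Measure (ℝ×ℝ)) = (volume : Measure ℝ).prod volume
    from Measure.volume_eq_prod ..] at hind ⊢
  rw [integral_prod _ hind]
  have key : ∀ x : ℝ, (∫ y, S2.indicator g (x, y)) =
      (Set.Icc (0:ℝ) 1).indicator (fun x' => ∫ y in Set.Icc 0 (1-x'), g (x', y)) x := by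
    intro x
    by_cases hx : x ∈ Set.Icc (0:ℝ) 1
    · rw [Set.indicator_of_mem hx]
      have : (fun y => S2.indicator g (x, y))
          = (Set.Icc (0:ℝ) (1-x)).indicator (fun y => g (x, y)) := by
        funext y
        by_cases hy : y ∈ Set.Icc (0:ℝ) (1-x)
        · rw [Set.indicator_of_mem hy, Set.indicator_of_mem]
          simp only [Set.mem_Icc] at hy hx
          exact ⟨hx.1, hy.1, by linarith [hy.2]⟩
        · rw [Set.indicator_of_notMem hy, Set.indicator_of_notMem]
          simp only [Set.mem_Icc, not_and_or, not_le] at hy ⊢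
          intro hmem
          obtain ⟨h1, h2, h3⟩ := hmem
          rcases hy with h | h <;> [linarith; linarith]
      rw [this, integral_indicator measurableSet_Icc]
    · rw [Set.indicator_of_notMem hx]
      have : (fun y => S2.indicator g (x, y)) = fun _ => (0:ℝ) := by
        funext y
        rw [Set.indicator_of_notMem]
        simp only [Set.mem_Icc, not_and_or, not_le] at hx
        intro hmem
        obtain ⟨h1, h2, h3⟩ := hmem
        rcases hx with h | h <;> linarith
      rw [this, integral_zero]
  simp_rw [key]
  rw [integral_indicator measurableSet_Icc]
  have inner_eq : ∀ x ∈ Set.Icc (0:ℝ) 1,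
      (∫ y in Set.Icc 0 (1-x), g (x, y)) = (c0 + c1*x) * (1-x) + c2 * ((1-x)^2/2) := by
    intro x hx
    simp only [Set.mem_Icc] at hx
    rw [MeasureTheory.integral_Icc_eq_integral_Ioc,
      ← intervalIntegral.integral_of_le (by linarith : (0:ℝ) ≤ 1 - x)]
    exact inner_int (c0 + c1*x) c2 (1-x)
  rw [setIntegral_congr_fun measurableSet_Icc inner_eq]
  have expand : ∀ x : ℝ, (c0 + c1*x) * (1-x) + c2 * ((1-x)^2/2)
      = (c0 + c2/2) + (c1 - c0 - c2) * x + (c2/2 - c1) * x^2 := by intro x; ring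
  simp_rw [expand]
  rw [MeasureTheory.integral_Icc_eq_integral_Ioc,
    ← intervalIntegral.integral_of_le (by norm_num : (0:ℝ) ≤ 1)]
  have i1 : IntervalIntegrable (fun x : ℝ => (c0 + c2/2)) volume 0 1 := intervalIntegrable_const
  have i2 : IntervalIntegrable (fun x : ℝ => (c1 - c0 - c2) * x) volume 0 1 :=
    IntervalIntegrable.const_mul intervalIntegral.intervalIntegrable_id _
  have i3 : IntervalIntegrable (fun x : ℝ => (c2/2 - c1) * x^2) volume 0 1 := by
    apply Continuous.intervalIntegrable; fun_prop
  rw [intervalIntegral.integral_add (i1.add i2) i3, intervalIntegral.integral_add i1 i2]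
  rw [intervalIntegral.integral_const, intervalIntegral.integral_const_mul,
    intervalIntegral.integral_const_mul, integral_id, integral_pow]
  norm_num; ring

lemma integral_refT (c0 c1 c2 : ℝ) :
    (∫ x in refT, (c0 + c1 * x 0 + c2 * x 1)) = c0/2 + c1/6 + c2/6 := by
  have h := e2_mp.setIntegral_preimage_emb e2.measurableEmbedding
    (fun p : ℝ × ℝ => c0 + c1 * p.1 + c2 * p.2) S2
  rw [refT_preimage]
  rw [show (fun x : E2 => c0 + c1 * x 0 + c2 * x 1)
      = fun x : E2 => c0 + c1 * (e2 x).1 + c2 * (e2 x).2 from rfl]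
  rw [h, integral_S2]

end Stmt0Aux

open Stmt0Aux in

/-- the divergences of the reference Fortin–Soulie bubble fields
span exactly the zero-mean affine functions. -/
theorem stmt0 :
    {f : E2 → ℝ | ∃ a b : ℝ, f = fun x => a * dphi 0 x + b * dphi 1 x} =
      {q : E2 → ℝ | IsPolyDeg 1 q ∧ (∫ x in refT, q x) = 0} := by
  ext f
  simp only [Set.mem_setOf_eq]
  constructor
  · rintro ⟨a, b, rfl⟩
    have hfun : (fun x : E2 => a * dphi 0 x + b * dphi 1 x)
        = fun x : E2 => (6*(a+b)) + (-(12*a+6*b)) * x 0 + (-(6*a+12*b)) * x 1 := by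
      funext x; rw [dphi0, dphi1]; ring
    rw [hfun]
    refine ⟨isPolyDeg_affine _ _ _, ?_⟩
    rw [integral_refT]
    ring
  · rintro ⟨hpoly, hint⟩
    obtain ⟨c0, c1, c2, hc⟩ := affine_of_isPolyDeg hpoly
    have hfun : f = fun x : E2 => c0 + c1 * x 0 + c2 * x 1 := funext hc
    rw [hfun] at hint
    rw [integral_refT] at hint
    refine ⟨(-2*c1+c2)/18, (c1-2*c2)/18, ?_⟩
    funext x
    rw [hc x, dphi0, dphi1]
    linear_combination (2:ℝ) * hint
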